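/- Let R be a commutative ring, h₁, h₂, h₃, l₁, l₂, l₃, l₄ ∈ R, and consider the 5×5 antisymmetric 'Jerry' matrix J with upper-triangular entries J₁₂ = l₁, J₁₃ = l₂, J₁₄ = l₃, J₁₅ = 0, J₂₃ = 0, J₂₄ = l₃, J₂₅ = l₄, J₃₄ = h₁, J₃₅ = h₂, J₄₅ = h₃. Then each of the five 4×4 Pfaffians of J lies in the ideal generated by l₁, l₂, l₃, l₄. -/
import Mathlib


/-- The Pfaffian of a 4×4 antisymmetric matrix. -/
def pfaffian4 {R : Type*} [CommRing R] (N : Matrix (Fin 4) (Fin 4) R) : R :=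
  N 0 1 * N 2 3 - N 0 2 * N 1 3 + N 0 3 * N 1 2

/-- The 4×4 submatrix of a 5×5 matrix obtained by deleting the `i`-th row and column. -/
def deleteRC {R : Type*} [CommRing R] (M : Matrix (Fin 5) (Fin 5) R) (i : Fin 5) :
    Matrix (Fin 4) (Fin 4) R :=
  M.submatrix i.succAbove i.succAbove

lemma mem_span4 {R : Type*} [CommRing R] (l₁ l₂ l₃ l₄ a b c d : R) :
    a * l₁ + b * l₂ + c * l₃ + d * l₄ ∈ Ideal.span {l₁, l₂, l₃, l₄} := by
  have h : ∀ x ∈ ({l₁, l₂, l₃, l₄} : Set R), x ∈ Ideal.span {l₁, l₂, l₃, l₄} :=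
    fun x hx => Ideal.subset_span hx
  refine add_mem (add_mem (add_mem ?_ ?_) ?_) ?_ <;>
    exact Ideal.mul_mem_left _ _ (h _ (by simp))

/-- Each 4×4 Pfaffian of the `Jerry` matrix lies in the ideal `(l₁, l₂, l₃, l₄)`. -/
theorem jerry_pfaffians_in_ideal (R : Type*) [CommRing R]
    (h₁ h₂ h₃ l₁ l₂ l₃ l₄ : R) :
    let J : Matrix (Fin 5) (Fin 5) R :=
      !![0, l₁, l₂, l₃, 0;
         -l₁, 0, 0, l₃, l₄;
         -l₂, 0, 0, h₁, h₂;
         -l₃, -l₃, -h₁, 0, h₃;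
         0, -l₄, -h₂, -h₃, 0]
    ∀ i : Fin 5, pfaffian4 (deleteRC J i) ∈ Ideal.span {l₁, l₂, l₃, l₄} := by
  intro J i
  fin_cases i
  · show (0 : R) * h₃ - l₃ * h₂ + l₄ * h₁ ∈ _
    have := mem_span4 l₁ l₂ l₃ l₄ 0 0 (-h₂) h₁
    convert this using 1; ring
  · show l₂ * h₃ - l₃ * h₂ + (0 : R) * h₁ ∈ _
    have := mem_span4 l₁ l₂ l₃ l₄ 0 h₃ (-h₂) 0
    convert this using 1; ring
  · show l₁ * h₃ - l₃ * l₄ + (0 : R) * l₃ ∈ _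
    have := mem_span4 l₁ l₂ l₃ l₄ h₃ 0 (-l₄) 0
    convert this using 1; ring
  · show l₁ * h₂ - l₂ * l₄ + (0 : R) * (0 : R) ∈ _
    have := mem_span4 l₁ l₂ l₃ l₄ h₂ (-l₄) 0 0
    convert this using 1; ring
  · show l₁ * h₁ - l₂ * l₃ + l₃ * (0 : R) ∈ _
    have := mem_span4 l₁ l₂ l₃ l₄ h₁ (-l₃) 0 0
    convert this using 1; ring
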